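/- Let Pₙ be monic polynomials satisfying P_{n+1}(x) + (θ - Aₙ - Cₙ)Pₙ(x) + CₙA_{n-1}P_{n-1}(x) = x Pₙ(x) with P₀=1, P₁(x)=x-θ+A₀, where A_{n-1}>0, Cₙ>0 for n≥1 and C₀=0. Then Pₙ(θ) = A₀A₁⋯A_{n-1} ≠ 0 and Aₙ = P_{n+1}(θ)/Pₙ(θ); the polynomials P̃ₙ(x) = (P_{n+1}(x) - AₙPₙ(x))/(x-θ) are monic of degree n and satisfy P̃_{n+1}(x) + (θ - Aₙ - C_{n+1})P̃ₙ(x) + CₙAₙ P̃_{n-1}(x) = x P̃ₙ(x); moreover Pₙ(x) = P̃ₙ(x) - Cₙ P̃_{n-1}(x). -/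

import Mathlib

open Polynomial Finset

/-- The Karlin–McGregor / Christoffel transformation lemma for monic orthogonal
polynomials written in the A,C-form of the three-term recurrence. -/
theorem stmt10 (θ : ℝ) (A C : ℕ → ℝ) (P : ℕ → Polynomial ℝ)
    (hA : ∀ n, 0 < A n) (hC : ∀ n, 1 ≤ n → 0 < C n) (hC0 : C 0 = 0)
    (hP0 : P 0 = 1) (hP1 : P 1 = X - Polynomial.C (θ - A 0))
    (hmonic : ∀ n, (P n).Monic ∧ (P n).natDegree = n)
    (hrec : ∀ n, 1 ≤ n →
      P (n + 1) + Polynomial.C (θ - A n - C n) * P n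
        + Polynomial.C (C n * A (n - 1)) * P (n - 1) = X * P n) :
    (∀ n, (P n).eval θ = ∏ j ∈ range n, A j) ∧
    (∀ n, (P n).eval θ ≠ 0) ∧
    (∀ n, A n = (P (n + 1)).eval θ / (P n).eval θ) ∧
    ∃ Pt : ℕ → Polynomial ℝ,
      (∀ n, (X - Polynomial.C θ) * Pt n = P (n + 1) - Polynomial.C (A n) * P n) ∧
      (∀ n, (Pt n).Monic ∧ (Pt n).natDegree = n) ∧
      (∀ n, 1 ≤ n →
        Pt (n + 1) + Polynomial.C (θ - A n - C (n + 1)) * Pt n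
          + Polynomial.C (C n * A n) * Pt (n - 1) = X * Pt n) ∧
      (∀ n, 1 ≤ n → P n = Pt n - Polynomial.C (C n) * Pt (n - 1)) := by
  -- Step 1: value at θ
  have key2 : ∀ n, (P n).eval θ = ∏ j ∈ range n, A j ∧
      (P (n+1)).eval θ = ∏ j ∈ range (n+1), A j := by
    intro n
    induction n with
    | zero => simp [hP0, hP1]
    | succ n ih =>
      refine ⟨ih.2, ?_⟩
      have h := congrArg (eval θ) (hrec (n+1) (by omega))
      simp only [Nat.add_sub_cancel, eval_add, eval_mul, eval_C, eval_X] at h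
      rw [ih.1, ih.2] at h
      have hp : ∏ j ∈ range (n+1), A j = (∏ j ∈ range n, A j) * A n :=
        prod_range_succ A n
      rw [prod_range_succ]
      linear_combination h + C (n+1) * hp
  have heval : ∀ n, (P n).eval θ = ∏ j ∈ range n, A j := fun n => (key2 n).1
  have hne : ∀ n, (P n).eval θ ≠ 0 := by
    intro n
    rw [heval]
    exact ne_of_gt (prod_pos fun j _ => hA j)
  have hArat : ∀ n, A n = (P (n + 1)).eval θ / (P n).eval θ := by
    intro n
    rw [heval, heval, prod_range_succ]
    field_simp [ne_of_gt (prod_pos fun j (_ : j ∈ range n) => hA j)]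
  refine ⟨heval, hne, hArat, ?_⟩
  -- the transformed polynomials
  set Q : ℕ → Polynomial ℝ := fun n => P (n+1) - Polynomial.C (A n) * P n with hQdef
  have hroot : ∀ n, IsRoot (Q n) θ := by
    intro n
    simp only [hQdef, IsRoot, eval_sub, eval_mul, eval_C, heval, prod_range_succ]
    ring
  set Pt : ℕ → Polynomial ℝ := fun n => Q n /ₘ (X - Polynomial.C θ) with hPtdef
  have hPt : ∀ n, (X - Polynomial.C θ) * Pt n = Q n := fun n =>
    (mul_divByMonic_eq_iff_isRoot).mpr (hroot n)
  have hXC : (X - Polynomial.C θ : Polynomial ℝ) ≠ 0 := X_sub_C_ne_zero θ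
  -- monicity and degree of Q
  have hQmonic : ∀ n, (Q n).Monic ∧ (Q n).natDegree = n + 1 := by
    intro n
    have h1 := (hmonic (n+1)).1
    have hd1 : (P (n+1)).degree = (n+1 : ℕ) := by
      rw [degree_eq_natDegree h1.ne_zero, (hmonic (n+1)).2]
    have hd0 : (Polynomial.C (A n) * P n).degree < (P (n+1)).degree := by
      rw [hd1]
      calc (Polynomial.C (A n) * P n).degree ≤ (P n).degree := by
            calc (Polynomial.C (A n) * P n).degree
                ≤ (Polynomial.C (A n)).degree + (P n).degree := degree_mul_le _ _
              _ ≤ 0 + (P n).degree := add_le_add degree_C_le le_rfl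
              _ = (P n).degree := zero_add _
        _ = (n : ℕ) := by rw [degree_eq_natDegree (hmonic n).1.ne_zero, (hmonic n).2]
        _ < ((n+1 : ℕ) : WithBot ℕ) := WithBot.coe_lt_coe.mpr (Nat.lt_succ_self n)
    have hmq : (Q n).Monic := by
      have : (Q n).degree = (P (n+1)).degree := degree_sub_eq_left_of_degree_lt hd0
      show (P (n+1) - Polynomial.C (A n) * P n).Monic
      rw [sub_eq_add_neg]
      exact h1.add_of_left (by rwa [degree_neg])
    refine ⟨hmq, ?_⟩
    have : (Q n).degree = (P (n+1)).degree := degree_sub_eq_left_of_degree_lt hd0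
    rw [hd1] at this
    exact natDegree_eq_of_degree_eq_some this
  have hPtmonic : ∀ n, (Pt n).Monic ∧ (Pt n).natDegree = n := by
    intro n
    have hm : (Pt n).Monic := by
      have := (hQmonic n).1
      rw [← hPt n] at this
      exact (monic_X_sub_C θ).of_mul_monic_left this
    refine ⟨hm, ?_⟩
    have hne0 : Pt n ≠ 0 := hm.ne_zero
    have := congrArg natDegree (hPt n)
    rw [natDegree_mul hXC hne0, natDegree_X_sub_C, (hQmonic n).2] at this
    omega
  -- recurrence for Q
  have hQrec : ∀ n, 1 ≤ n →
      Q (n + 1) + Polynomial.C (θ - A n - C (n + 1)) * Q n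
        + Polynomial.C (C n * A n) * Q (n - 1) = X * Q n := by
    intro n hn
    obtain ⟨m, rfl⟩ : ∃ m, n = m + 1 := ⟨n - 1, (Nat.succ_pred_eq_of_pos hn).symm⟩
    have e1 := hrec (m + 2) (by omega)
    have e2 := hrec (m + 1) (by omega)
    have h21 : m + 2 - 1 = m + 1 := rfl
    simp only [Nat.add_sub_cancel, h21] at e1 e2 ⊢
    simp only [hQdef, map_sub, map_mul] at *
    linear_combination e1 - Polynomial.C (A (m+1)) * e2
  -- recurrence for Pt
  have hPtrec : ∀ n, 1 ≤ n →
      Pt (n + 1) + Polynomial.C (θ - A n - C (n + 1)) * Pt n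
        + Polynomial.C (C n * A n) * Pt (n - 1) = X * Pt n := by
    intro n hn
    apply mul_left_cancel₀ hXC
    have a1 := hPt (n+1)
    have a2 := hPt n
    have a3 := hPt (n-1)
    have hid := hQrec n hn
    linear_combination a1 + Polynomial.C (θ - A n - C (n + 1)) * a2
      + Polynomial.C (C n * A n) * a3 - X * a2 + hid
  -- the final identity
  have hfin : ∀ n, 1 ≤ n → P n = Pt n - Polynomial.C (C n) * Pt (n - 1) := by
    intro n hn
    obtain ⟨m, rfl⟩ : ∃ m, n = m + 1 := ⟨n - 1, (Nat.succ_pred_eq_of_pos hn).symm⟩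
    apply mul_left_cancel₀ hXC
    have a2 := hPt (m+1)
    have a3 := hPt m
    have e2 := hrec (m + 1) (by omega)
    simp only [Nat.add_sub_cancel] at e2 ⊢
    simp only [hQdef, map_sub, map_mul] at *
    linear_combination Polynomial.C (C (m+1)) * a3 - a2 - e2
  exact ⟨Pt, hPt, hPtmonic, hPtrec, hfin⟩
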